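/- Let F ∈ L_1(S). Let x, y ∈ B_0 and m ∈ ℤ be such that F(x) ∈ B_m, x < y ≤ F_0(x) in the branch order of B_0, and F(y) ∉ B_m∖{m}. Assume additionally that F(0) ∉ {z ∈ B_m : x + m < z ≤ max B_m}. Then Per(F) = ℕ. -/

import Mathlib

open Set Filter Function

noncomputable section

/-- The real axis in `ℂ`. -/
def realAxis : Set ℂ := {z : ℂ | z.im = 0}

/-- The union of the branches of `S`. -/
def branches : Set ℂ := {z : ℂ | (∃ m : ℤ, z.re = (m : ℝ)) ∧ z.im ∈ Set.Icc (0 : ℝ) 1}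

/-- The universal covering `S = ℝ ∪ B` of the space `σ`. -/
def Sspace : Set ℂ := realAxis ∪ branches

/-- The branch `B_m`. -/
def branch (m : ℤ) : Set ℂ := {z : ℂ | z.re = (m : ℝ) ∧ z.im ∈ Set.Icc (0 : ℝ) 1}

/-- `F` is a continuous self-map of `S` of degree `d`, i.e. `F ∈ L_d(S)`. -/
def DegMap (d : ℤ) (F : ℂ → ℂ) : Prop :=
  Set.MapsTo F Sspace Sspace ∧ ContinuousOn F Sspace ∧
    ∀ z ∈ Sspace, F (z + 1) = F z + (d : ℂ)

/-- `z` is a periodic (mod 1) point of `F` of period `n`. -/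
def IsPeriodicMod1 (F : ℂ → ℂ) (z : ℂ) (n : ℕ) : Prop :=
  0 < n ∧ (∃ k : ℤ, F^[n] z = z + (k : ℂ)) ∧
    ∀ i : ℕ, 0 < i → i < n → ∀ k : ℤ, F^[i] z ≠ z + (k : ℂ)

/-- The set `Per(F)` of periods (mod 1) of `F`. -/
def PerSet (F : ℂ → ℂ) : Set ℕ := {n : ℕ | ∃ z ∈ Sspace, IsPeriodicMod1 F z n}

/-- `x` is a true periodic point of `G` of least period `n`. -/
def IsTruePeriodic (G : ℂ → ℂ) (x : ℂ) (n : ℕ) : Prop :=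
  0 < n ∧ G^[n] x = x ∧ ∀ i : ℕ, 0 < i → i < n → G^[i] x ≠ x

/-- The rotation number of `z` under `F` is `ρ`. -/
def HasRotNum (F : ℂ → ℂ) (z : ℂ) (ρ : ℝ) : Prop :=
  Filter.Tendsto (fun n : ℕ => ((F^[n] z).re - z.re) / (n : ℝ)) Filter.atTop (nhds ρ)

/-- `Rot_ℝ(F)`. -/
def RotR (F : ℂ → ℂ) : Set ℝ := {ρ : ℝ | ∃ x : ℝ, HasRotNum F (x : ℂ) ρ}

/-- `Rot(F)`. -/
def RotSet (F : ℂ → ℂ) : Set ℝ := {ρ : ℝ | ∃ z ∈ Sspace, HasRotNum F z ρ}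

/-- `Per(α, F)`: periods (mod 1) of points with rotation number `α`. -/
def PerRot (F : ℂ → ℂ) (α : ℝ) : Set ℕ :=
  {n : ℕ | ∃ z ∈ Sspace, IsPeriodicMod1 F z n ∧ HasRotNum F z α}

/-- The Sharkovsky ordering `a ≤_Sh b`. -/
def sharkLe (a b : ℕ) : Prop :=
  if ordCompl[2] a = 1 then
    (if ordCompl[2] b = 1 then a.factorization 2 ≤ b.factorization 2 else True)
  else
    ordCompl[2] b ≠ 1 ∧ (b.factorization 2 < a.factorization 2 ∨
      (b.factorization 2 = a.factorization 2 ∧ ordCompl[2] b ≤ ordCompl[2] a))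

/-- The initial segment `Shs(s)` of the Sharkovsky ordering. -/
def Shs (s : ℕ) : Set ℕ := {k : ℕ | 0 < k ∧ sharkLe k s}

/-- Initial segments of the Sharkovsky ordering: either `Shs(s)` for some `s ∈ ℕ`,
or the set of all powers of `2` (corresponding to the symbol `2^∞`). -/
def ShInitialSeg (E : Set ℕ) : Prop :=
  (∃ s : ℕ, 0 < s ∧ E = Shs s) ∨ E = {k : ℕ | ∃ i : ℕ, k = 2 ^ i}

/-- `M(c, d)`. -/
def Mset (c d : ℝ) : Set ℕ :=
  {n : ℕ | 0 < n ∧ ∃ k : ℤ, c < (k : ℝ) / (n : ℝ) ∧ (k : ℝ) / (n : ℝ) < d}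

/-- `Λ(ρ, E)`. -/
def Lam (ρ : ℝ) (E : Set ℕ) : Set ℕ :=
  {m : ℕ | ∃ k : ℤ, ∃ n : ℕ, 0 < n ∧ Int.gcd k (n : ℤ) = 1 ∧ ρ = (k : ℝ) / (n : ℝ) ∧
    ∃ q ∈ E, m = n * q}

/-- The lifted orbit of `z` under `F`. -/
def LOrb (F : ℂ → ℂ) (z : ℂ) : Set ℂ :=
  {w : ℂ | ∃ n : ℕ, ∃ k : ℤ, w = F^[n] z + (k : ℂ)}

/-- The convex hull of `A` in `S`: the smallest closed connected subset of `S`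
containing `A`. -/
def sHull (A : Set ℂ) : Set ℂ :=
  ⋂₀ {C : Set ℂ | A ⊆ C ∧ C ⊆ Sspace ∧ IsClosed C ∧ IsConnected C}

/-- Compact nondegenerate intervals of `S`. -/
def IsCNInterval (I : Set ℂ) : Prop :=
  ∃ a b : ℂ, a ∈ Sspace ∧ b ∈ Sspace ∧ a ≠ b ∧ I = sHull {a, b}

/-- `I` `G`-covers `J`: there is a subinterval `I' ⊆ I` with `G(I') = J`. -/
def Covers (G : ℂ → ℂ) (I J : Set ℂ) : Prop :=
  ∃ a b : ℂ, a ∈ I ∧ b ∈ I ∧ sHull {a, b} ⊆ I ∧ G '' sHull {a, b} = J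

/-- The interior of `K` relative to the subspace `S`. -/
def relInterior (K : Set ℂ) : Set ℂ := {z ∈ Sspace | K ∈ nhdsWithin z Sspace}

/-- The map `F_0 : S → B_0`, `F_0(z) = F(z) − Re(F(z))`. -/
def Fzero (F : ℂ → ℂ) (z : ℂ) : ℂ := F z - ((F z).re : ℂ)

/-- The set `A + ℤ` of integer translates of `A`. -/
def trZ (A : Set ℂ) : Set ℂ := {w : ℂ | ∃ z ∈ A, ∃ k : ℤ, w = z + (k : ℂ)}

/-- `(I, <_I)` positively `G`-covers `(J, <_J)`, where `I` is the oriented interval with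
endpoints `a = min I`, `b = max I`, and `J` the oriented interval with endpoints
`c = min J`, `d = max J`; the order along `I` is: `x ≤_I y` iff `x ∈ ⟨{a, y}⟩`. -/
def PosCovers (G : ℂ → ℂ) (a b c d : ℂ) : Prop :=
  ∃ x y : ℂ, x ∈ sHull {a, b} ∧ y ∈ sHull {a, b} ∧ x ∈ sHull {a, y} ∧ G x = c ∧ G y = d

/-- `(I, <_I)` negatively `G`-covers `(J, <_J)`. -/
def NegCovers (G : ℂ → ℂ) (a b c d : ℂ) : Prop := PosCovers G a b d c

/-- A concrete 3-star `X₃ ⊆ ℂ` with branching point `0`: the union of the three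
segments `[-1,0]`, `[0,1]` and `[0,i]`. -/
def star3 : Set ℂ :=
  {z : ℂ | z.im = 0 ∧ z.re ∈ Set.Icc (-1 : ℝ) 1} ∪
    {z : ℂ | z.re = 0 ∧ z.im ∈ Set.Icc (0 : ℝ) 1}

/-- `TPer(f)`: the set of least periods of the periodic points of `f` in `X`. -/
def TPer (f : ℂ → ℂ) (X : Set ℂ) : Set ℕ :=
  {n : ℕ | ∃ x ∈ X, IsTruePeriodic f x n}

open Classical in
/-- The taxicab distance on `S`. -/
def sDist (x y : ℂ) : ℝ :=
  if (∃ m : ℤ, x.re = (m : ℝ) ∧ y.re = (m : ℝ)) ∧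
      x.im ∈ Set.Icc (0 : ℝ) 1 ∧ y.im ∈ Set.Icc (0 : ℝ) 1 then
    |x.im - y.im|
  else |x.im| + |x.re - y.re| + |y.im|

namespace Aux16


lemma pt_re (k : ℤ) (t : ℝ) : ((k:ℂ) + (t:ℂ) * Complex.I).re = (k:ℝ) := by simp
lemma pt_im (k : ℤ) (t : ℝ) : ((k:ℂ) + (t:ℂ) * Complex.I).im = t := by simp

lemma pt_mem_Sspace (k : ℤ) {t : ℝ} (ht : t ∈ Icc (0:ℝ) 1) :
    ((k:ℂ) + (t:ℂ) * Complex.I) ∈ Sspace :=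
  Or.inr ⟨⟨k, by simp⟩, by simpa using ht⟩

lemma Sspace_add_int {z : ℂ} (hz : z ∈ Sspace) (k : ℤ) : z + (k:ℂ) ∈ Sspace := by
  rcases hz with h0 | ⟨⟨m', hm'⟩, him⟩
  · exact Or.inl (by simp [realAxis] at h0 ⊢; exact h0)
  · refine Or.inr ⟨⟨m' + k, ?_⟩, ?_⟩
    · simp [hm']
    · simpa using him

/-- the pin lemma: if `z ∈ S` and `z.im - |z.re - c| > 0` then `z` lies on branch `c`. -/
lemma pin {z : ℂ} (hz : z ∈ Sspace) (c : ℤ) (h : 0 < z.im - |z.re - (c:ℝ)|) :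
    z = (c:ℂ) + (z.im:ℂ) * Complex.I := by
  rcases hz with h0 | ⟨⟨m', hm'⟩, him⟩
  · exfalso
    simp only [realAxis, mem_setOf_eq] at h0
    rw [h0] at h
    have := abs_nonneg (z.re - (c:ℝ)); linarith
  · have h1 : |(m':ℝ) - (c:ℝ)| < z.im := by rw [← hm']; linarith
    have h2 : |(m':ℝ) - (c:ℝ)| < 1 := lt_of_lt_of_le h1 him.2
    have h3 : m' = c := by
      have : |((m' - c : ℤ) : ℝ)| < 1 := by push_cast; simpa using h2
      have h4 : |m' - c| < 1 := by exact_mod_cast (by rwa [← Int.cast_abs] at this : ((|m' - c| : ℤ):ℝ) < 1)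
      have := Int.abs_lt_one_iff.mp h4
      omega
    apply Complex.ext
    · simp [hm', h3]
    · simp

/-- classification of points of `S` with `z.im = |z.re|`. -/
lemma hzero {z : ℂ} (hz : z ∈ Sspace) (h : z.im - |z.re| = 0) :
    z = 0 ∨ z = 1 + Complex.I ∨ z = -1 + Complex.I := by
  rcases hz with h0 | ⟨⟨m', hm'⟩, him⟩
  · left
    simp only [realAxis, mem_setOf_eq] at h0
    rw [h0] at h
    have hre : z.re = 0 := by
      have : |z.re| = 0 := by linarith
      exact abs_eq_zero.mp this
    apply Complex.ext <;> simp [hre, h0]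
  · have him' : z.im = |(m':ℝ)| := by rw [← hm']; linarith
    have habs : |(m':ℝ)| ≤ 1 := by rw [← him']; exact him.2
    have hm2 : |m'| ≤ 1 := by exact_mod_cast (by rwa [← Int.cast_abs] at habs : ((|m'|:ℤ):ℝ) ≤ 1)
    have hlb : -1 ≤ m' := by have := (abs_le.mp hm2).1; omega
    have hub : m' ≤ 1 := (abs_le.mp hm2).2
    interval_cases m'
    · right; right; apply Complex.ext <;> simp_all
    · left; apply Complex.ext <;> simp_all
    · right; left; apply Complex.ext <;> simp_all




lemma isClosed_rootset {g : ℝ → ℝ} {l r v : ℝ}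
    (hg : ContinuousOn g (Icc l r)) : IsClosed {t ∈ Icc l r | g t = v} := by
  have h : {t ∈ Icc l r | g t = v} = Icc l r ∩ g ⁻¹' {v} := by ext t; simp [and_comm]
  rw [h]
  exact hg.preimage_isClosed_of_isClosed isClosed_Icc isClosed_singleton

lemma exists_least_root {g : ℝ → ℝ} {l r v : ℝ} (hlr : l ≤ r)
    (hg : ContinuousOn g (Icc l r)) (hv : v ∈ uIcc (g l) (g r)) :
    ∃ t0, t0 ∈ Icc l r ∧ g t0 = v ∧ ∀ t ∈ Icc l r, t < t0 → g t ≠ v := by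
  have hg' : ContinuousOn g (uIcc l r) := by rwa [uIcc_of_le hlr]
  obtain ⟨t1, ht1, hgt1⟩ := intermediate_value_uIcc hg' hv
  rw [uIcc_of_le hlr] at ht1
  set T := {t ∈ Icc l r | g t = v} with hT
  have hTne : T.Nonempty := ⟨t1, ht1, hgt1⟩
  have hTc : IsClosed T := isClosed_rootset hg
  have hTbdd : BddBelow T := ⟨l, fun t ht => ht.1.1⟩
  have hmem : sInf T ∈ T := hTc.csInf_mem hTne hTbdd
  exact ⟨sInf T, hmem.1, hmem.2, fun t ht hlt hgt => absurd (csInf_le hTbdd ⟨ht, hgt⟩) (not_le.mpr hlt)⟩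

lemma exists_greatest_root {g : ℝ → ℝ} {l r v : ℝ} (hlr : l ≤ r)
    (hg : ContinuousOn g (Icc l r)) (hv : v ∈ uIcc (g l) (g r)) :
    ∃ t0, t0 ∈ Icc l r ∧ g t0 = v ∧ ∀ t ∈ Icc l r, t0 < t → g t ≠ v := by
  have hg' : ContinuousOn g (uIcc l r) := by rwa [uIcc_of_le hlr]
  obtain ⟨t1, ht1, hgt1⟩ := intermediate_value_uIcc hg' hv
  rw [uIcc_of_le hlr] at ht1
  set T := {t ∈ Icc l r | g t = v} with hT
  have hTne : T.Nonempty := ⟨t1, ht1, hgt1⟩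
  have hTc : IsClosed T := isClosed_rootset hg
  have hTbdd : BddAbove T := ⟨r, fun t ht => ht.1.2⟩
  have hmem : sSup T ∈ T := hTc.csSup_mem hTne hTbdd
  exact ⟨sSup T, hmem.1, hmem.2, fun t ht hlt hgt => absurd (le_csSup hTbdd ⟨ht, hgt⟩) (not_le.mpr hlt)⟩

/-- pullback with marked endpoints, oriented version. -/
lemma pull_aux {g : ℝ → ℝ} {l r c d : ℝ} (hlr : l ≤ r)
    (hg : ContinuousOn g (Icc l r)) (hgl : g l = c) (hgr : g r = d) :
    ∃ p q, l ≤ p ∧ p ≤ q ∧ q ≤ r ∧ g p = c ∧ g q = d ∧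
      ∀ t ∈ Icc p q, g t ∈ uIcc c d := by
  obtain ⟨q, hqmem, hgq, hqleast⟩ := exists_least_root hlr hg
    (v := d) (by rw [hgl, hgr]; exact right_mem_uIcc)
  obtain ⟨p, hpmem, hgp, hpgreat⟩ := exists_greatest_root hqmem.1
      (hg.mono (Icc_subset_Icc le_rfl hqmem.2)) (v := c) (by rw [hgl, hgq]; exact left_mem_uIcc)
  refine ⟨p, q, hpmem.1, hpmem.2, hqmem.2, hgp, hgq, ?_⟩
  intro t ht
  have htlq : t ∈ Icc l q := ⟨le_trans hpmem.1 ht.1, ht.2⟩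
  have htlr : t ∈ Icc l r := ⟨htlq.1, le_trans ht.2 hqmem.2⟩
  by_contra hout
  have hout2 : g t < min c d ∨ max c d < g t := by
    rw [Set.uIcc, Set.mem_Icc, not_and_or, not_le, not_le] at hout
    rcases hout with h | h
    · exact Or.inl (by simpa using h)
    · exact Or.inr (by simpa using h)
  -- helper subsets
  have hcont_tq : ContinuousOn g (uIcc t q) := by
    rw [uIcc_of_le ht.2]; exact hg.mono (Icc_subset_Icc htlr.1 hqmem.2)
  have hcont_pt : ContinuousOn g (uIcc p t) := by
    rw [uIcc_of_le ht.1]; exact hg.mono (Icc_subset_Icc hpmem.1 htlr.2)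
  have rootC : (c ∈ uIcc (g t) (g q)) → False := by
    -- c-root s in [t,q] with s > t (since g t ≠ c), contradicting maximality of p
    intro hcv
    obtain ⟨s, hs, hgs⟩ := intermediate_value_uIcc hcont_tq hcv
    rw [uIcc_of_le ht.2] at hs
    have hst : t < s := by
      rcases eq_or_lt_of_le hs.1 with h | h
      · exfalso; rw [← h] at hgs; rw [hgs] at hout
        exact hout left_mem_uIcc
      · exact h
    exact hpgreat s ⟨le_trans htlr.1 hs.1, hs.2⟩ (lt_of_le_of_lt ht.1 hst) hgs
  have rootD : (d ∈ uIcc (g p) (g t)) → False := by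
    intro hdv
    obtain ⟨s, hs, hgs⟩ := intermediate_value_uIcc hcont_pt hdv
    rw [uIcc_of_le ht.1] at hs
    have hst : s < t := by
      rcases eq_or_lt_of_le hs.2 with h | h
      · exfalso; rw [h] at hgs; rw [hgs] at hout
        exact hout right_mem_uIcc
      · exact h
    exact hqleast s ⟨le_trans hpmem.1 hs.1, le_trans hs.2 htlr.2⟩ (lt_of_lt_of_le hst ht.2) hgs
  rcases hout2 with hlow | hhigh <;> rcases le_total c d with hcd | hdc
  · -- g t < min = c ≤ d = g q
    exact rootC (mem_uIcc.mpr (Or.inl ⟨le_of_lt (by simpa [min_eq_left hcd] using hlow), by rw [hgq]; exact hcd⟩))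
  · -- d < c, g t < min = d : d-root in [p,t] (g p = c > d > g t)
    exact rootD (mem_uIcc.mpr (Or.inr ⟨le_of_lt (by simpa [min_eq_right hdc] using hlow), by rw [hgp]; exact hdc⟩))
  · -- c ≤ d = max < g t : d-root in [p,t] (g p = c ≤ d < g t)
    exact rootD (mem_uIcc.mpr (Or.inl ⟨by rw [hgp]; exact hcd, le_of_lt (by simpa [max_eq_right hcd] using hhigh)⟩))
  · -- d ≤ c = max < g t : c-root in [t,q] (g q = d ≤ c < g t)
    exact rootC (mem_uIcc.mpr (Or.inr ⟨by rw [hgq]; exact hdc, le_of_lt (by simpa [max_eq_left hdc] using hhigh)⟩))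

/-- general pullback: from bracketing endpoint values, extract a marked subinterval
mapping into `uIcc c d` with endpoints hitting `c` and `d`. -/
lemma pull {g : ℝ → ℝ} {p q c d : ℝ} (hg : ContinuousOn g (uIcc p q))
    (hc : c ∈ uIcc (g p) (g q)) (hd : d ∈ uIcc (g p) (g q)) :
    ∃ p' q', uIcc p' q' ⊆ uIcc p q ∧ g p' = c ∧ g q' = d ∧
      ∀ t ∈ uIcc p' q', g t ∈ uIcc c d := by
  obtain ⟨tp, htp, hgtp⟩ := intermediate_value_uIcc hg hc
  obtain ⟨tq, htq, hgtq⟩ := intermediate_value_uIcc hg hd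
  have hsub : uIcc tp tq ⊆ uIcc p q := uIcc_subset_uIcc htp htq
  have hg2 : ContinuousOn g (uIcc tp tq) := hg.mono hsub
  rcases le_total tp tq with h | h
  · obtain ⟨p', q', h1, h2, h3, h4, h5, h6⟩ := pull_aux h (by rwa [uIcc_of_le h] at hg2) hgtp hgtq
    refine ⟨p', q', ?_, h4, h5, ?_⟩
    · refine subset_trans (uIcc_subset_uIcc ?_ ?_) hsub <;> rw [uIcc_of_le h]
      · exact ⟨h1, le_trans h2 h3⟩
      · exact ⟨le_trans h1 h2, h3⟩
    · intro t ht; rw [uIcc_of_le h2] at ht; exact h6 t ht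
  · obtain ⟨q', p', h1, h2, h3, h4, h5, h6⟩ := pull_aux h (by rw [uIcc_comm] at hg2; rwa [uIcc_of_le h] at hg2) hgtq hgtp
    refine ⟨p', q', ?_, h5, h4, ?_⟩
    · refine subset_trans (uIcc_subset_uIcc ?_ ?_) hsub <;> rw [uIcc_comm tp tq, uIcc_of_le h]
      · exact ⟨le_trans h1 h2, h3⟩
      · exact ⟨h1, le_trans h2 h3⟩
    · intro t ht
      rw [uIcc_comm p' q', uIcc_of_le h2] at ht
      rw [uIcc_comm c d]
      exact h6 t ht



section Chain
/-- iterated composition of a sequence of maps: `iterg g i = g (i-1) ∘ ... ∘ g 0`. -/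
def iterg (g : ℕ → ℝ → ℝ) : ℕ → ℝ → ℝ
  | 0 => id
  | (i+1) => fun t => g i (iterg g i t)

lemma iterg_zero (g : ℕ → ℝ → ℝ) (t : ℝ) : iterg g 0 t = t := rfl

lemma iterg_succ (g : ℕ → ℝ → ℝ) (i : ℕ) (t : ℝ) :
    iterg g (i+1) t = g i (iterg g i t) := rfl

lemma iterg_shift (g : ℕ → ℝ → ℝ) (i : ℕ) (t : ℝ) :
    iterg g (i+1) t = iterg (fun j => g (j+1)) i (g 0 t) := by
  induction i with
  | zero => rfl
  | succ i ih => rw [iterg_succ, ih]; rfl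

lemma chain : ∀ (n : ℕ) (u v : ℕ → ℝ) (g : ℕ → ℝ → ℝ),
    (∀ i, i < n → ContinuousOn (g i) (uIcc (u i) (v i))) →
    (∀ i, i < n → uIcc (u (i+1)) (v (i+1)) ⊆ uIcc (g i (u i)) (g i (v i))) →
    ∃ x y, uIcc x y ⊆ uIcc (u 0) (v 0) ∧
      ((iterg g n x = u n ∧ iterg g n y = v n) ∨ (iterg g n x = v n ∧ iterg g n y = u n)) ∧
      (∀ t ∈ uIcc x y, ∀ i, i ≤ n → iterg g i t ∈ uIcc (u i) (v i)) ∧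
      ContinuousOn (iterg g n) (uIcc x y) := by
  intro n
  induction n with
  | zero =>
    intro u v g _ _
    refine ⟨u 0, v 0, subset_rfl, Or.inl ⟨rfl, rfl⟩, fun t ht i hi => ?_, continuousOn_id⟩
    have : i = 0 := by omega
    subst this
    exact ht
  | succ n ih =>
    intro u v g hc hb
    obtain ⟨x', y', hsub', hmark', hin', hcont'⟩ :=
      ih (fun i => u (i+1)) (fun i => v (i+1)) (fun i => g (i+1))
        (fun i hi => hc (i+1) (by omega)) (fun i hi => hb (i+1) (by omega))
    have hx'mem : x' ∈ uIcc (u 1) (v 1) := hsub' left_mem_uIcc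
    have hy'mem : y' ∈ uIcc (u 1) (v 1) := hsub' right_mem_uIcc
    have hb0 := hb 0 (by omega)
    obtain ⟨x, y, hsub, hgx, hgy, himg⟩ := pull (hc 0 (by omega)) (hb0 hx'mem) (hb0 hy'mem)
    have hmapsto : ∀ t ∈ uIcc x y, g 0 t ∈ uIcc x' y' := himg
    refine ⟨x, y, hsub, ?_, ?_, ?_⟩
    · rw [iterg_shift, iterg_shift, hgx, hgy]
      exact hmark'
    · intro t ht i hi
      rcases Nat.eq_zero_or_pos i with h0 | hpos
      · subst h0; rw [iterg_zero]; exact hsub ht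
      · obtain ⟨i', rfl⟩ := Nat.exists_eq_succ_of_ne_zero (Nat.pos_iff_ne_zero.mp hpos)
        rw [iterg_shift]
        exact hin' (g 0 t) (hmapsto t ht) i' (by omega)
    · have : ContinuousOn (fun t => iterg (fun j => g (j+1)) n (g 0 t)) (uIcc x y) :=
        hcont'.comp ((hc 0 (by omega)).mono hsub) hmapsto
      have heq : EqOn (iterg g (n+1)) (fun t => iterg (fun j => g (j+1)) n (g 0 t)) (uIcc x y) :=
        fun t _ => iterg_shift g n t
      exact ContinuousOn.congr this heq

lemma fixpt (n : ℕ) (u v : ℕ → ℝ) (g : ℕ → ℝ → ℝ)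
    (hun : u n = u 0) (hvn : v n = v 0)
    (hc : ∀ i, i < n → ContinuousOn (g i) (uIcc (u i) (v i)))
    (hb : ∀ i, i < n → uIcc (u (i+1)) (v (i+1)) ⊆ uIcc (g i (u i)) (g i (v i))) :
    ∃ t0, iterg g n t0 = t0 ∧ ∀ i, i ≤ n → iterg g i t0 ∈ uIcc (u i) (v i) := by
  obtain ⟨x, y, hsub, hmark, hin, hcont⟩ := chain n u v g hc hb
  have hx : x ∈ uIcc (u 0) (v 0) := hsub left_mem_uIcc
  have hy : y ∈ uIcc (u 0) (v 0) := hsub right_mem_uIcc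
  set C := iterg g n with hC
  have key : ∀ w z : ℝ, w ∈ uIcc x y → z ∈ uIcc x y → C w = u 0 → C z = v 0 →
      ∃ t0, C t0 = t0 ∧ t0 ∈ uIcc x y := by
    intro w z hw hz hCw hCz
    have hwmem : w ∈ uIcc (u 0) (v 0) := hsub hw
    have hzmem : z ∈ uIcc (u 0) (v 0) := hsub hz
    have hf : ContinuousOn (fun t => C t - t) (uIcc w z) :=
      ((hcont.mono (uIcc_subset_uIcc hw hz)).sub continuousOn_id)
    have h0 : (0:ℝ) ∈ uIcc (C w - w) (C z - z) := by
      rw [hCw, hCz]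
      rw [mem_uIcc] at hwmem hzmem ⊢
      rcases hwmem with ⟨h1, h2⟩ | ⟨h1, h2⟩ <;> rcases hzmem with ⟨h3, h4⟩ | ⟨h3, h4⟩
      · exact Or.inl ⟨by linarith, by linarith⟩
      · exact Or.inl ⟨by linarith, by linarith⟩
      · exact Or.inr ⟨by linarith, by linarith⟩
      · exact Or.inr ⟨by linarith, by linarith⟩
    obtain ⟨t0, ht0, hCt0⟩ := intermediate_value_uIcc hf h0
    have : C t0 - t0 = 0 := hCt0
    exact ⟨t0, by linarith, uIcc_subset_uIcc hw hz ht0⟩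
  have main : ∃ t0, C t0 = t0 ∧ t0 ∈ uIcc x y := by
    rcases hmark with ⟨h1, h2⟩ | ⟨h1, h2⟩
    · exact key x y left_mem_uIcc right_mem_uIcc (by rw [h1, hun]) (by rw [h2, hvn])
    · exact key y x right_mem_uIcc left_mem_uIcc (by rw [h2, hun]) (by rw [h1, hvn])
  obtain ⟨t0, hfix, ht0⟩ := main
  exact ⟨t0, hfix, fun i hi => hin t0 ht0 i hi⟩

end Chain

section Master

variable (G : ℂ → ℂ)

lemma master (n : ℕ) (hn : 2 ≤ n)
    (P₁ P₂ Q₁ Q₂ R₁ R₂ : ℝ) (gP gQ gR : ℝ → ℝ) (δ : ℤ)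
    (hcP : ContinuousOn gP (uIcc P₁ P₂))
    (hcQ : ContinuousOn gQ (uIcc Q₁ Q₂))
    (hcR : ContinuousOn gR (uIcc R₁ R₂))
    (hbPQ : uIcc Q₁ Q₂ ⊆ uIcc (gP P₁) (gP P₂))
    (hbPR : uIcc R₁ R₂ ⊆ uIcc (gP P₁) (gP P₂))
    (hbQQ : uIcc Q₁ Q₂ ⊆ uIcc (gQ Q₁) (gQ Q₂))
    (hbQR : uIcc R₁ R₂ ⊆ uIcc (gQ Q₁) (gQ Q₂))
    (hbRP : uIcc P₁ P₂ ⊆ uIcc (gR R₁) (gR R₂))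
    (pinP : ∀ (k : ℤ), ∀ t ∈ uIcc P₁ P₂, (gP t ∈ uIcc Q₁ Q₂ ∨ gP t ∈ uIcc R₁ R₂) →
        G ((k:ℂ) + (t:ℂ) * Complex.I) = (k:ℂ) + (gP t : ℂ) * Complex.I)
    (pinQ : ∀ (k : ℤ), ∀ t ∈ uIcc Q₁ Q₂, (gQ t ∈ uIcc Q₁ Q₂ ∨ gQ t ∈ uIcc R₁ R₂) →
        G ((k:ℂ) + (t:ℂ) * Complex.I) = ((k + δ : ℤ):ℂ) + (gQ t : ℂ) * Complex.I)
    (pinR : ∀ (k : ℤ), ∀ t ∈ uIcc R₁ R₂, gR t ∈ uIcc P₁ P₂ →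
        G ((k:ℂ) + (t:ℂ) * Complex.I) = ((k + δ : ℤ):ℂ) + (gR t : ℂ) * Complex.I) :
    ∃ (t : ℕ → ℝ) (c : ℕ → ℤ), c n = ((n:ℤ)-1)*δ ∧ t 0 ∈ uIcc P₁ P₂ ∧ t n = t 0 ∧
      t 1 = gP (t 0) ∧
      (∀ j, 0 < j → j < n - 1 → t j ∈ uIcc Q₁ Q₂) ∧ (t (n-1) ∈ uIcc R₁ R₂) ∧
      (∀ j, j ≤ n → G^[j] (((0:ℤ):ℂ) + ((t 0 : ℝ):ℂ) * Complex.I)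
          = ((c j : ℤ) : ℂ) + ((t j : ℝ):ℂ) * Complex.I) := by
  classical
  set u : ℕ → ℝ := fun i => if i = 0 ∨ n ≤ i then P₁ else if i < n-1 then Q₁ else R₁ with hu
  set v : ℕ → ℝ := fun i => if i = 0 ∨ n ≤ i then P₂ else if i < n-1 then Q₂ else R₂ with hv
  set g : ℕ → ℝ → ℝ := fun i => if i = 0 then gP else if i < n-1 then gQ else gR with hg
  have hu0 : u 0 = P₁ := by simp [hu]
  have hv0 : v 0 = P₂ := by simp [hv]
  have hunn : u n = P₁ := by simp [hu]
  have hvnn : v n = P₂ := by simp [hv]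
  have huQ : ∀ i, 0 < i → i < n-1 → u i = Q₁ := by
    intro i h1 h2; simp only [hu]; rw [if_neg (by omega), if_pos h2]
  have hvQ : ∀ i, 0 < i → i < n-1 → v i = Q₂ := by
    intro i h1 h2; simp only [hv]; rw [if_neg (by omega), if_pos h2]
  have huR : u (n-1) = R₁ := by simp only [hu]; rw [if_neg (by omega), if_neg (by omega)]
  have hvR : v (n-1) = R₂ := by simp only [hv]; rw [if_neg (by omega), if_neg (by omega)]
  have hgP : g 0 = gP := by simp [hg]
  have hgQ : ∀ i, 0 < i → i < n-1 → g i = gQ := by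
    intro i h1 h2; simp only [hg]; rw [if_neg (by omega), if_pos h2]
  have hgR : g (n-1) = gR := by simp only [hg]; rw [if_neg (by omega), if_neg (by omega)]
  have hc : ∀ i, i < n → ContinuousOn (g i) (uIcc (u i) (v i)) := by
    intro i hi
    rcases Nat.eq_zero_or_pos i with rfl | hpos
    · rw [hgP, hu0, hv0]; exact hcP
    · rcases lt_or_ge i (n-1) with hlt | hge
      · rw [hgQ i hpos hlt, huQ i hpos hlt, hvQ i hpos hlt]; exact hcQ
      · have : i = n-1 := by omega
        subst this; rw [hgR, huR, hvR]; exact hcR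
  have hb : ∀ i, i < n → uIcc (u (i+1)) (v (i+1)) ⊆ uIcc (g i (u i)) (g i (v i)) := by
    intro i hi
    rcases Nat.eq_zero_or_pos i with rfl | hpos
    · simp only [Nat.zero_add]
      rw [hgP, hu0, hv0]
      rcases lt_or_ge 1 (n-1) with hlt | hge
      · rw [huQ 1 one_pos hlt, hvQ 1 one_pos hlt]; exact hbPQ
      · have h1 : (1:ℕ) = n-1 := by omega
        rw [h1, huR, hvR]; exact hbPR
    · rcases lt_or_ge i (n-1) with hlt | hge
      · rw [hgQ i hpos hlt, huQ i hpos hlt, hvQ i hpos hlt]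
        rcases lt_or_ge (i+1) (n-1) with hlt2 | hge2
        · rw [huQ (i+1) (by omega) hlt2, hvQ (i+1) (by omega) hlt2]; exact hbQQ
        · have : i+1 = n-1 := by omega
          rw [this, huR, hvR]; exact hbQR
      · have hieq : i = n-1 := by omega
        subst hieq
        rw [hgR, huR, hvR]
        have : n - 1 + 1 = n := by omega
        rw [this, hunn, hvnn]; exact hbRP
  obtain ⟨t0, hfix, hin⟩ := fixpt n u v g (by rw [hunn, hu0]) (by rw [hvnn, hv0]) hc hb
  set t : ℕ → ℝ := fun j => iterg g j t0 with ht
  have ht0 : t 0 = t0 := rfl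
  have htP : t 0 ∈ uIcc P₁ P₂ := by
    have := hin 0 (by omega); rwa [hu0, hv0] at this
  have htn : t n = t 0 := hfix
  have htQ : ∀ j, 0 < j → j < n-1 → t j ∈ uIcc Q₁ Q₂ := by
    intro j h1 h2
    have := hin j (by omega)
    rwa [huQ j h1 h2, hvQ j h1 h2] at this
  have htR : t (n-1) ∈ uIcc R₁ R₂ := by
    have := hin (n-1) (by omega)
    rwa [huR, hvR] at this
  have htstep : ∀ j, t (j+1) = g j (t j) := fun j => iterg_succ g j t0
  have ht1 : t 1 = gP (t 0) := by rw [htstep 0, hgP]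
  set c : ℕ → ℤ := fun j => if j = 0 then 0 else ((j:ℤ)-1)*δ with hcdef
  have hc0 : c 0 = 0 := rfl
  have hc1 : c 1 = 0 := by simp [hcdef]
  have hcn : c n = ((n:ℤ)-1)*δ := by
    simp only [hcdef]; rw [if_neg (by omega)]
  have hcstep : ∀ j, 0 < j → c (j+1) = c j + δ := by
    intro j hj; simp only [hcdef]
    rw [if_neg (by omega), if_neg (by omega)]; push_cast; ring
  refine ⟨t, c, hcn, htP, htn, ht1, htQ, htR, ?_⟩
  intro j hj
  induction j with
  | zero => simp [ht0, hc0]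
  | succ j ih =>
    have hjn : j < n := by omega
    have prev := ih (by omega)
    rw [Function.iterate_succ_apply', prev]
    -- location of the value t (j+1)
    have hval : t (j+1) ∈ uIcc Q₁ Q₂ ∨ t (j+1) ∈ uIcc R₁ R₂ ∨ (j+1 = n ∧ t (j+1) ∈ uIcc P₁ P₂) := by
      rcases lt_or_ge (j+1) (n-1) with h2 | h3
      · exact Or.inl (htQ (j+1) (by omega) h2)
      · rcases eq_or_lt_of_le h3 with h4 | h5
        · exact Or.inr (Or.inl (h4 ▸ htR))
        · have h6 : j + 1 = n := by omega
          exact Or.inr (Or.inr ⟨h6, by rw [h6, htn]; exact htP⟩)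
    rcases Nat.eq_zero_or_pos j with rfl | hpos
    · -- step 0 : pinP
      have hloc1 : gP (t 0) ∈ uIcc Q₁ Q₂ ∨ gP (t 0) ∈ uIcc R₁ R₂ := by
        rw [← ht1]
        rcases hval with h | h | h
        · exact Or.inl h
        · exact Or.inr h
        · exfalso; omega
      have hpin := pinP (c 0) (t 0) htP hloc1
      rw [hc0] at hpin ⊢
      rw [hpin, hc1, ← ht1]
    · rcases lt_or_ge j (n-1) with hlt | hge
      · -- pinQ
        have hQ : t j ∈ uIcc Q₁ Q₂ := htQ j hpos hlt
        have hstep' : gQ (t j) = t (j+1) := by rw [htstep j, hgQ j hpos hlt]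
        have hloc1 : gQ (t j) ∈ uIcc Q₁ Q₂ ∨ gQ (t j) ∈ uIcc R₁ R₂ := by
          rw [hstep']
          rcases hval with h | h | h
          · exact Or.inl h
          · exact Or.inr h
          · exfalso; omega
        have hpin := pinQ (c j) (t j) hQ hloc1
        rw [hpin, hstep', hcstep j hpos]
      · -- pinR
        have hjeq : j = n-1 := by omega
        have hR : t j ∈ uIcc R₁ R₂ := by rw [hjeq]; exact htR
        have hstep' : gR (t j) = t (j+1) := by
          rw [htstep j]; congr 1; rw [hjeq, hgR]
        have hjn1 : j + 1 = n := by omega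
        have hloc1 : gR (t j) ∈ uIcc P₁ P₂ := by
          rw [hstep', hjn1, htn]; exact htP
        have hpin := pinR (c j) (t j) hR hloc1
        rw [hpin, hstep', hcstep j hpos]

end Master



/-- the branch coordinate of the image `G(it)` viewed from branch `e`. -/
def thet (G : ℂ → ℂ) (e : ℤ) (t : ℝ) : ℝ :=
  (G ((t:ℂ) * Complex.I)).im - |(G ((t:ℂ) * Complex.I)).re - (e:ℝ)|

/-- the height function `ψ`. -/
def psi (G : ℂ → ℂ) (t : ℝ) : ℝ := thet G 0 t

lemma psi_def (G : ℂ → ℂ) (t : ℝ) :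
    psi G t = (G ((t:ℂ) * Complex.I)).im - |(G ((t:ℂ) * Complex.I)).re| := by
  simp [psi, thet]

variable {G : ℂ → ℂ}

lemma tI_mem_Sspace {t : ℝ} (ht : t ∈ Icc (0:ℝ) 1) : ((t:ℂ) * Complex.I) ∈ Sspace := by
  have := pt_mem_Sspace 0 ht
  simpa using this

lemma degInt (HG3 : ∀ z ∈ Sspace, G (z + 1) = G z + 1) :
    ∀ (k : ℤ), ∀ z ∈ Sspace, G (z + (k:ℂ)) = G z + (k:ℂ) := by
  intro k
  induction k using Int.induction_on with
  | zero => simp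
  | succ i ih =>
    intro z hz
    have h1 : z + ((i:ℤ)+1 : ℂ) = (z + (i:ℤ)) + 1 := by push_cast; ring
    have h2 := HG3 (z + ((i:ℤ):ℂ)) (Sspace_add_int hz i)
    calc G (z + (((i:ℤ)+1 : ℤ):ℂ)) = G ((z + ((i:ℤ):ℂ)) + 1) := by rw [← h1]; norm_cast
    _ = G (z + ((i:ℤ):ℂ)) + 1 := h2
    _ = G z + ((i:ℤ):ℂ) + 1 := by rw [ih z hz]
    _ = G z + (((i:ℤ)+1:ℤ):ℂ) := by push_cast; ring
  | pred i ih =>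
    intro z hz
    have h2 := HG3 (z + ((-(i:ℤ)-1:ℤ):ℂ)) (Sspace_add_int hz _)
    have h1 : (z + ((-(i:ℤ)-1:ℤ):ℂ)) + 1 = z + ((-(i:ℤ):ℤ):ℂ) := by push_cast; ring
    rw [h1] at h2
    have h3 := ih z hz
    have h4 : G (z + ((-(i:ℤ)-1:ℤ):ℂ)) = G (z + ((-(i:ℤ):ℤ):ℂ)) - 1 := by
      rw [h2]; ring
    rw [h4, h3]; push_cast; ring

lemma cont_thet (HG2 : ContinuousOn G Sspace) (e : ℤ) :
    ContinuousOn (thet G e) (Icc (0:ℝ) 1) := by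
  have h1 : ContinuousOn (fun t:ℝ => G ((t:ℂ) * Complex.I)) (Icc (0:ℝ) 1) := by
    apply HG2.comp ((Complex.continuous_ofReal.mul continuous_const).continuousOn)
    intro t ht
    exact tI_mem_Sspace ht
  exact (Complex.continuous_im.comp_continuousOn h1).sub
    (continuous_abs.comp_continuousOn
      ((Complex.continuous_re.comp_continuousOn h1).sub continuousOn_const))

lemma cont_psi (HG2 : ContinuousOn G Sspace) : ContinuousOn (psi G) (Icc (0:ℝ) 1) :=
  cont_thet HG2 0

/-- the pin lemma in coordinates: a positive `θ_e`-value pins the image to branch `e`. -/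
lemma pinT (HG1 : MapsTo G Sspace Sspace) (HG3 : ∀ z ∈ Sspace, G (z + 1) = G z + 1)
    (e k : ℤ) {t : ℝ} (ht : t ∈ Icc (0:ℝ) 1) (hpos : 0 < thet G e t) :
    G ((k:ℂ) + (t:ℂ) * Complex.I) = ((k + e : ℤ):ℂ) + ((thet G e t : ℝ):ℂ) * Complex.I := by
  set zt := (t:ℂ) * Complex.I with hzt
  have hztS : zt ∈ Sspace := tI_mem_Sspace ht
  have hGz : G zt ∈ Sspace := HG1 hztS
  have hpin := pin hGz e hpos
  have hre : (G zt).re = (e:ℝ) := by rw [hpin]; simp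
  have hval : thet G e t = (G zt).im := by
    simp only [thet, ← hzt, hre, sub_self, abs_zero, sub_zero]
  have harg : (k:ℂ) + zt = zt + (k:ℂ) := by ring
  rw [harg, degInt HG3 k zt hztS, hpin, hval]
  push_cast; ring

lemma pinK (HG1 : MapsTo G Sspace Sspace) (HG3 : ∀ z ∈ Sspace, G (z + 1) = G z + 1)
    (k : ℤ) {t : ℝ} (ht : t ∈ Icc (0:ℝ) 1) (hpos : 0 < psi G t) :
    G ((k:ℂ) + (t:ℂ) * Complex.I) = (k:ℂ) + ((psi G t : ℝ):ℂ) * Complex.I := by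
  have := pinT HG1 HG3 0 k ht hpos
  simpa [psi] using this

lemma pin0 (HG1 : MapsTo G Sspace Sspace) (HG3 : ∀ z ∈ Sspace, G (z + 1) = G z + 1)
    {t : ℝ} (ht : t ∈ Icc (0:ℝ) 1) (hpos : 0 < psi G t) :
    G ((t:ℂ) * Complex.I) = ((psi G t : ℝ):ℂ) * Complex.I := by
  have := pinK HG1 HG3 0 ht hpos
  simpa using this



variable {G : ℂ → ℂ}

/-- the conclusion we need for a single `n`. -/
def KeyConcl (G : ℂ → ℂ) (n : ℕ) : Prop :=
  ∃ z ∈ Sspace, (∃ k : ℤ, G^[n] z = z + (k:ℂ)) ∧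
    ∀ i, 0 < i → i < n → ∀ k : ℤ, G^[i] z ≠ z + (k:ℂ)

lemma caseZ (HG1 : MapsTo G Sspace Sspace) (HG2 : ContinuousOn G Sspace)
    (HG3 : ∀ z ∈ Sspace, G (z + 1) = G z + 1)
    (a b : ℝ) (ha : 0 < a) (hab : a < b) (hb1 : b ≤ 1)
    (hpa : b ≤ psi G a) (hpb : psi G b ≤ 0) (hp0 : psi G 0 ≤ a)
    (hnc : ∀ t, a < t → t ≤ b → psi G t = 0 → G ((t:ℂ) * Complex.I) = 0)
    (n : ℕ) (hn : 2 ≤ n) : KeyConcl G n := by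
  have h01 : (0:ℝ) ≤ 1 := by norm_num
  have ha1 : a ≤ 1 := le_trans hab.le hb1
  have h0b : (0:ℝ) ≤ b := le_trans ha.le hab.le
  have hψ := cont_psi HG2
  -- the roots
  obtain ⟨w, hwmem, hψw, hwleast⟩ := exists_least_root hab.le
    (hψ.mono (Icc_subset_Icc ha.le hb1)) (v := a)
    (mem_uIcc.mpr (Or.inr ⟨le_trans hpb ha.le, le_trans hab.le hpa⟩))
  obtain ⟨β, hβmem, hψβ, hβleast⟩ := exists_least_root ha.le
    (hψ.mono (Icc_subset_Icc le_rfl ha1)) (v := b)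
    (mem_uIcc.mpr (Or.inl ⟨le_trans hp0 hab.le, hpa⟩))
  have hwb : w < b := by
    rcases eq_or_lt_of_le hwmem.2 with h | h
    · exfalso; rw [h] at hψw; linarith
    · exact h
  have hwa : a < w := by
    rcases eq_or_lt_of_le hwmem.1 with h | h
    · exfalso; rw [← h] at hψw; linarith
    · exact h
  have hβ0 : 0 < β := by
    rcases eq_or_lt_of_le hβmem.1 with h | h
    · exfalso; rw [← h] at hψβ; linarith
    · exact h
  have hβa : β ≤ a := hβmem.2
  obtain ⟨s₀, hs₀mem, hψs₀, hs₀least⟩ := exists_least_root hwmem.2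
    (hψ.mono (Icc_subset_Icc (le_trans ha.le hwmem.1) hb1)) (v := 0)
    (mem_uIcc.mpr (Or.inr ⟨hpb, by rw [hψw]; exact ha.le⟩))
  obtain ⟨eI, heImem, hψeI, heIgreat⟩ := exists_greatest_root hs₀mem.1
    (hψ.mono (Icc_subset_Icc (le_trans ha.le hwmem.1) (le_trans hs₀mem.2 hb1))) (v := β)
    (mem_uIcc.mpr (Or.inr ⟨by rw [hψs₀]; exact hβ0.le, by rw [hψw]; exact hβa⟩))
  have heIa : a < eI := lt_of_lt_of_le hwa heImem.1
  have hs₀b : s₀ ≤ b := hs₀mem.2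
  -- interval containments in [0,1]
  have hsubP : Icc (0:ℝ) β ⊆ Icc (0:ℝ) 1 := Icc_subset_Icc le_rfl (le_trans hβa ha1)
  have hsubQ : Icc a w ⊆ Icc (0:ℝ) 1 := Icc_subset_Icc ha.le (le_trans hwmem.2 hb1)
  have hsubR : Icc eI s₀ ⊆ Icc (0:ℝ) 1 :=
    Icc_subset_Icc (le_trans ha.le (le_of_lt heIa)) (le_trans hs₀b hb1)
  have huP : uIcc (0:ℝ) β = Icc 0 β := uIcc_of_le hβ0.le
  have huQ : uIcc a w = Icc a w := uIcc_of_le hwa.le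
  have huR : uIcc eI s₀ = Icc eI s₀ := uIcc_of_le heImem.2
  -- apply master
  obtain ⟨t, c, hcn, htP, htn, ht1, htQloc, htRloc, hreal⟩ :=
    master G n hn 0 β a w eI s₀ (psi G) (psi G) (psi G) 0
    (by rw [huP]; exact hψ.mono hsubP)
    (by rw [huQ]; exact hψ.mono hsubQ)
    (by rw [huR]; exact hψ.mono hsubR)
    (by rw [huQ, hψβ]
        intro s hs
        exact mem_uIcc.mpr (Or.inl ⟨by linarith [hs.1], by linarith [hs.2]⟩))
    (by rw [huR, hψβ]
        intro s hs
        exact mem_uIcc.mpr (Or.inl ⟨by linarith [hs.1], by linarith [hs.2]⟩))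
    (by rw [huQ, hψw]
        intro s hs
        exact mem_uIcc.mpr (Or.inr ⟨by linarith [hs.1], by linarith [hs.2]⟩))
    (by rw [huR, hψw]
        intro s hs
        exact mem_uIcc.mpr (Or.inr ⟨by linarith [hs.1], by linarith [hs.2]⟩))
    (by rw [huP, hψeI, hψs₀]
        intro s hs
        exact mem_uIcc.mpr (Or.inr ⟨hs.1, hs.2⟩))
    (by -- pinP
        intro k s hsmem hval
        rw [huP] at hsmem
        have hpos : 0 < psi G s := by
          rcases hval with h | h
          · rw [huQ] at h; linarith [h.1]
          · rw [huR] at h; linarith [h.1]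
        exact pinK HG1 HG3 k (hsubP hsmem) hpos)
    (by -- pinQ
        intro k s hsmem hval
        rw [huQ] at hsmem
        have hpos : 0 < psi G s := by
          rcases hval with h | h
          · rw [huQ] at h; linarith [h.1]
          · rw [huR] at h; linarith [h.1]
        have := pinK HG1 HG3 k (hsubQ hsmem) hpos
        simpa using this)
    (by -- pinR
        intro k s hsmem hval
        rw [huR] at hsmem
        rw [huP] at hval
        rcases lt_or_eq_of_le hval.1 with hpos | hzero
        · have := pinK HG1 HG3 k (hsubR hsmem) hpos
          simpa using this
        · have hG0 : G ((s:ℂ) * Complex.I) = 0 :=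
            hnc s (lt_of_lt_of_le heIa hsmem.1) (le_trans hsmem.2 hs₀b) hzero.symm
          have hS : ((s:ℂ) * Complex.I) ∈ Sspace := by
            have := pt_mem_Sspace 0 (hsubR hsmem)
            simpa using this
          have harg : (k:ℂ) + (s:ℂ) * Complex.I = ((s:ℂ) * Complex.I) + (k:ℂ) := by ring
          rw [harg, degInt HG3 k _ hS, hG0, ← hzero]
          push_cast
          ring)
  -- assemble the conclusion
  have ht0memP : t 0 ∈ Icc (0:ℝ) β := by rw [← huP]; exact htP
  have ht0mem01 : t 0 ∈ Icc (0:ℝ) 1 := hsubP ht0memP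
  refine ⟨((0:ℤ):ℂ) + ((t 0 : ℝ):ℂ) * Complex.I, pt_mem_Sspace 0 ht0mem01, ⟨c n, ?_⟩, ?_⟩
  · have h := hreal n le_rfl
    rw [h, htn]
    push_cast
    ring
  · intro i hi0 hin k heq
    have hri := hreal i (le_of_lt hin)
    rw [hri] at heq
    have him : t i = t 0 := by
      have h := congrArg Complex.im heq
      simpa using h
    rcases lt_or_ge i (n-1) with hlt | hge
    · have hQ := htQloc i hi0 hlt
      rw [huQ] at hQ
      have h1 : t 0 = a := le_antisymm (le_trans ht0memP.2 hβa) (him ▸ hQ.1)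
      have h2 : β = a := le_antisymm hβa (h1 ▸ ht0memP.2)
      have ht0β : t 0 = β := by rw [h1, h2]
      have ht1b : t 1 = b := by rw [ht1, ht0β, hψβ]
      have hQ1 : t 1 ∈ Icc a w := by
        have := htQloc 1 one_pos (by omega)
        rwa [huQ] at this
      linarith [hQ1.2]
    · have hieq : i = n-1 := by omega
      subst hieq
      have hR := htRloc
      rw [huR] at hR
      have : a < t 0 := him ▸ lt_of_lt_of_le heIa hR.1
      linarith [ht0memP.2]

lemma caseC (HG1 : MapsTo G Sspace Sspace) (HG2 : ContinuousOn G Sspace)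
    (HG3 : ∀ z ∈ Sspace, G (z + 1) = G z + 1)
    (a b : ℝ) (ha : 0 < a) (hab : a < b) (hb1 : b ≤ 1)
    (hpa : b ≤ psi G a) (hpb : psi G b ≤ 0)
    (t4 : ℝ) (ht4a : a < t4) (ht4b : t4 ≤ b)
    (ε : ℤ) (hε : ε = 1 ∨ ε = -1)
    (hGt4 : G ((t4:ℂ) * Complex.I) = (ε:ℂ) + Complex.I)
    (n : ℕ) (hn : 2 ≤ n) : KeyConcl G n := by
  have ha1 : a ≤ 1 := le_trans hab.le hb1
  have hψ := cont_psi HG2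
  have hθ := cont_thet HG2 ε
  have habs : |(ε:ℝ)| = 1 := by rcases hε with rfl | rfl <;> norm_num
  have hψt4 : psi G t4 = 0 := by
    simp only [psi, thet, hGt4]
    simp [habs]
  have hθt4 : thet G ε t4 = 1 := by
    simp only [thet, hGt4]
    simp
  -- w : first root of ψ = a in [a,b]
  obtain ⟨w, hwmem, hψw, hwleast⟩ := exists_least_root hab.le
    (hψ.mono (Icc_subset_Icc ha.le hb1)) (v := a)
    (mem_uIcc.mpr (Or.inr ⟨le_trans hpb ha.le, le_trans hab.le hpa⟩))
  have hwa : a < w := by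
    rcases eq_or_lt_of_le hwmem.1 with h | h
    · exfalso; rw [← h] at hψw; linarith
    · exact h
  have hwb : w < b := by
    rcases eq_or_lt_of_le hwmem.2 with h | h
    · exfalso; rw [h] at hψw; linarith
    · exact h
  -- t4 > w
  have ht4w : w < t4 := by
    rcases lt_or_ge w t4 with h | h
    · exact h
    · exfalso
      -- then t4 ∈ [a, w] with ψ t4 = 0 < a; find an a-root before w
      have ht4mem : t4 ∈ Icc a b := ⟨ht4a.le, ht4b⟩
      rcases eq_or_lt_of_le h with h2 | h2
      · rw [← h2] at hψw; rw [hψw] at hψt4; linarith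
      · -- strict: t4 < w; IVT on [a, t4] to find root of a
        have hc : ContinuousOn (psi G) (Icc a t4) :=
          hψ.mono (Icc_subset_Icc ha.le (le_trans ht4b hb1))
        have : a ∈ uIcc (psi G a) (psi G t4) := by
          rw [hψt4]
          exact mem_uIcc.mpr (Or.inr ⟨ha.le, le_trans hab.le hpa⟩)
        obtain ⟨s, hsmem, hψs⟩ := intermediate_value_uIcc
          (by rwa [uIcc_of_le ht4a.le]) this
        rw [uIcc_of_le ht4a.le] at hsmem
        exact hwleast s ⟨hsmem.1, le_trans hsmem.2 ht4b⟩ (lt_of_le_of_lt hsmem.2 h2) hψs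
  -- τ : greatest root of ψ = t4 on [a, w]
  obtain ⟨τ, hτmem, hψτ, hτgreat⟩ := exists_greatest_root hwmem.1
    (hψ.mono (Icc_subset_Icc ha.le (le_trans hwmem.2 hb1))) (v := t4)
    (mem_uIcc.mpr (Or.inr ⟨by rw [hψw]; exact ht4a.le, le_trans ht4b hpa⟩))
  have hτa : a ≤ τ := hτmem.1
  have hτw : τ ≤ w := hτmem.2
  -- θ at w
  have hGw : G ((w:ℂ) * Complex.I) = ((a:ℝ):ℂ) * Complex.I := by
    have := pin0 HG1 HG3 (t := w) ⟨le_trans ha.le hwmem.1, le_trans hwmem.2 hb1⟩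
      (by rw [hψw]; exact ha)
    rwa [hψw] at this
  have hθw : thet G ε w = a - 1 := by
    simp only [thet, hGw]
    simp [habs]
  -- subset facts
  have hsubP : Icc τ w ⊆ Icc (0:ℝ) 1 :=
    Icc_subset_Icc (le_trans ha.le hτa) (le_trans hwmem.2 hb1)
  have hsubQ : Icc w t4 ⊆ Icc (0:ℝ) 1 :=
    Icc_subset_Icc (le_trans ha.le hwmem.1) (le_trans ht4b hb1)
  have huP : uIcc τ w = Icc τ w := uIcc_of_le hτw
  have huQ : uIcc w t4 = Icc w t4 := uIcc_of_le ht4w.le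
  obtain ⟨t, c, hcn, htP, htn, ht1, htQloc, htRloc, hreal⟩ :=
    master G n hn τ w w t4 w t4 (psi G) (thet G ε) (thet G ε) ε
    (by rw [huP]; exact hψ.mono hsubP)
    (by rw [huQ]; exact hθ.mono hsubQ)
    (by rw [huQ]; exact hθ.mono hsubQ)
    (by rw [huQ, hψτ, hψw]
        intro s hs
        exact mem_uIcc.mpr (Or.inr ⟨by linarith [hs.1], by linarith [hs.2]⟩))
    (by rw [huQ, hψτ, hψw]
        intro s hs
        exact mem_uIcc.mpr (Or.inr ⟨by linarith [hs.1], by linarith [hs.2]⟩))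
    (by rw [huQ, hθw, hθt4]
        intro s hs
        exact mem_uIcc.mpr (Or.inl ⟨by linarith [hs.1, hsubQ hs |>.1], by linarith [hs.2, hsubQ hs |>.2]⟩))
    (by rw [huQ, hθw, hθt4]
        intro s hs
        exact mem_uIcc.mpr (Or.inl ⟨by linarith [hs.1, hsubQ hs |>.1], by linarith [hs.2, hsubQ hs |>.2]⟩))
    (by rw [huP, hθw, hθt4]
        intro s hs
        exact mem_uIcc.mpr (Or.inl ⟨by linarith [hs.1, hsubP hs |>.1], by linarith [hs.2, hsubP hs |>.2]⟩))
    (by -- pinP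
        intro k s hsmem hval
        rw [huP] at hsmem
        have hpos : 0 < psi G s := by
          rcases hval with h | h <;> rw [huQ] at h <;> linarith [h.1]
        exact pinK HG1 HG3 k (hsubP hsmem) hpos)
    (by -- pinQ
        intro k s hsmem hval
        rw [huQ] at hsmem
        have hpos : 0 < thet G ε s := by
          rcases hval with h | h <;> rw [huQ] at h <;> linarith [h.1]
        exact pinT HG1 HG3 ε k (hsubQ hsmem) hpos)
    (by -- pinR
        intro k s hsmem hval
        rw [huQ] at hsmem
        rw [huP] at hval
        have hpos : 0 < thet G ε s := by linarith [hval.1]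
        exact pinT HG1 HG3 ε k (hsubQ hsmem) hpos)
  have ht0memP : t 0 ∈ Icc τ w := by rw [← huP]; exact htP
  have ht0mem01 : t 0 ∈ Icc (0:ℝ) 1 := hsubP ht0memP
  refine ⟨((0:ℤ):ℂ) + ((t 0 : ℝ):ℂ) * Complex.I, pt_mem_Sspace 0 ht0mem01, ⟨c n, ?_⟩, ?_⟩
  · have h := hreal n le_rfl
    rw [h, htn]
    push_cast
    ring
  · intro i hi0 hin k heq
    have hri := hreal i (le_of_lt hin)
    rw [hri] at heq
    have him : t i = t 0 := by
      have h := congrArg Complex.im heq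
      simpa using h
    -- t i ∈ [w, t4] in all cases
    have hiloc : t i ∈ Icc w t4 := by
      rcases lt_or_ge i (n-1) with hlt | hge
      · have := htQloc i hi0 hlt; rwa [huQ] at this
      · have hieq : i = n-1 := by omega
        subst hieq
        have := htRloc; rwa [huQ] at this
    -- hence t 0 = w
    have ht0w : t 0 = w := le_antisymm ht0memP.2 (him ▸ hiloc.1)
    have ht1a : t 1 = a := by rw [ht1, ht0w, hψw]
    have ht1loc : t 1 ∈ Icc w t4 := by
      rcases lt_or_ge 1 (n-1) with hlt | hge
      · have := htQloc 1 one_pos hlt; rwa [huQ] at this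
      · have h1 : 1 = n-1 := by omega
        have := htRloc; rw [← h1] at this; rwa [huQ] at this
    linarith [ht1loc.1]


lemma key (HG1 : MapsTo G Sspace Sspace) (HG2 : ContinuousOn G Sspace)
    (HG3 : ∀ z ∈ Sspace, G (z + 1) = G z + 1)
    (a b : ℝ) (ha : 0 < a) (hab : a < b) (hb1 : b ≤ 1)
    (hpa : b ≤ psi G a) (hpb : psi G b ≤ 0) (hp0 : psi G 0 ≤ a)
    (n : ℕ) (hn : 1 ≤ n) : KeyConcl G n := by
  rcases eq_or_lt_of_le hn with h1 | h2
  · -- n = 1 : a fixed point in [a,b]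
    have hψ := cont_psi HG2
    have hsub : Icc a b ⊆ Icc (0:ℝ) 1 := Icc_subset_Icc ha.le hb1
    have hc : ContinuousOn (fun s => psi G s - s) (uIcc a b) := by
      rw [uIcc_of_le hab.le]
      exact (hψ.mono hsub).sub continuousOn_id
    have h0 : (0:ℝ) ∈ uIcc (psi G a - a) (psi G b - b) :=
      mem_uIcc.mpr (Or.inr ⟨by linarith, by linarith⟩)
    obtain ⟨s, hsmem, hs⟩ := intermediate_value_uIcc hc h0
    rw [uIcc_of_le hab.le] at hsmem
    have hfix : psi G s = s := by linarith [sub_eq_zero.mp hs]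
    have hspos : 0 < s := lt_of_lt_of_le ha hsmem.1
    have hzmem : ((s:ℂ) * Complex.I) ∈ Sspace := by
      have := pt_mem_Sspace 0 (hsub hsmem); simpa using this
    have hGz : G ((s:ℂ) * Complex.I) = (s:ℂ) * Complex.I := by
      have := pin0 HG1 HG3 (hsub hsmem) (by rw [hfix]; exact hspos)
      rwa [hfix] at this
    refine ⟨(s:ℂ) * Complex.I, hzmem, ⟨0, ?_⟩, ?_⟩
    · rw [← h1]; simpa using hGz
    · intro i hi0 hin
      exfalso; omega
  · -- n ≥ 2
    by_cases hC : ∃ t4, a < t4 ∧ t4 ≤ b ∧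
        (G ((t4:ℂ) * Complex.I) = 1 + Complex.I ∨ G ((t4:ℂ) * Complex.I) = -1 + Complex.I)
    · obtain ⟨t4, ht4a, ht4b, hor⟩ := hC
      rcases hor with h | h
      · exact caseC HG1 HG2 HG3 a b ha hab hb1 hpa hpb t4 ht4a ht4b 1 (Or.inl rfl)
          (by rw [h]; norm_num) n h2
      · exact caseC HG1 HG2 HG3 a b ha hab hb1 hpa hpb t4 ht4a ht4b (-1) (Or.inr rfl)
          (by rw [h]; norm_num) n h2
    · push_neg at hC
      have hnc : ∀ t, a < t → t ≤ b → psi G t = 0 → G ((t:ℂ) * Complex.I) = 0 := by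
        intro t hta htb hψt
        have htmem : t ∈ Icc (0:ℝ) 1 := ⟨le_trans ha.le hta.le, le_trans htb hb1⟩
        have hS : G ((t:ℂ) * Complex.I) ∈ Sspace := by
          apply HG1
          have := pt_mem_Sspace 0 htmem; simpa using this
        have h0 : (G ((t:ℂ) * Complex.I)).im - |(G ((t:ℂ) * Complex.I)).re| = 0 := by
          have : psi G t = _ - _ := rfl
          simpa [psi, thet] using hψt
        rcases hzero hS h0 with h | h | h
        · exact h
        · exact absurd h (hC t hta htb).1
        · exact absurd h (hC t hta htb).2
      exact caseZ HG1 HG2 HG3 a b ha hab hb1 hpa hpb hp0 hnc n h2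


end Aux16

open Aux16 in
/-- Let `F ∈ L₁(S)`, `x, y ∈ B₀`, `m ∈ ℤ` with `F(x) ∈ B_m`,
`x < y ≤ F₀(x)` in the branch order, `F(y) ∉ B_m ∖ {m}` and
`F(0) ∉ (x+m, max B_m]`. Then `Per(F) = ℕ`. -/
theorem statement16 (F : ℂ → ℂ) (hF : DegMap 1 F) (x y : ℂ) (m : ℤ)
    (hx : x ∈ branch 0) (hy : y ∈ branch 0)
    (hFx : F x ∈ branch m)
    (hxy : x.im < y.im) (hyF : y.im ≤ (Fzero F x).im)
    (hFy : F y ∉ branch m \ {(m : ℂ)})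
    (hF0 : F 0 ∉ {z ∈ branch m | x.im < z.im}) :
    PerSet F = {n : ℕ | 0 < n} := by
  classical
  obtain ⟨hmap, hcont, hdeg⟩ := hF
  have hdeg' : ∀ z ∈ Sspace, F (z + 1) = F z + 1 := by
    intro z hz; have := hdeg z hz; simpa using this
  set a : ℝ := x.im with hadef
  set b : ℝ := y.im with hbdef
  have hxre : x.re = 0 := by have := hx.1; simpa using this
  have hyre : y.re = 0 := by have := hy.1; simpa using this
  have hxa : x = (a:ℂ) * Complex.I := by
    apply Complex.ext <;> simp [hxre, hadef]
  have hyb : y = (b:ℂ) * Complex.I := by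
    apply Complex.ext <;> simp [hyre, hbdef]
  have hxS : x ∈ Sspace := Or.inr ⟨⟨0, by simpa using hxre⟩, hx.2⟩
  have hyS : y ∈ Sspace := Or.inr ⟨⟨0, by simpa using hyre⟩, hy.2⟩
  have h0S : (0:ℂ) ∈ Sspace := Or.inl (by simp [realAxis])
  set G : ℂ → ℂ := fun z => F z - (m:ℂ) with hGdef
  have hFG : ∀ w, F w = G w + (m:ℂ) := by intro w; simp [hGdef]
  have HG1 : MapsTo G Sspace Sspace := by
    intro z hz
    have := Sspace_add_int (hmap hz) (-m)
    simpa [hGdef, sub_eq_add_neg] using this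
  have HG2 : ContinuousOn G Sspace := hcont.sub continuousOn_const
  have HG3 : ∀ z ∈ Sspace, G (z + 1) = G z + 1 := by
    intro z hz
    simp only [hGdef]
    rw [hdeg' z hz]
    ring
  -- the Fx-height
  have hFxim : b ≤ (F x).im := by
    have : (Fzero F x).im = (F x).im := by simp [Fzero]
    rw [this] at hyF; exact hyF
  -- ψ-values
  have hpa : b ≤ psi G a := by
    rw [psi_def, ← hxa]
    have h1 : (G x).im = (F x).im := by simp [hGdef]
    have h2 : (G x).re = 0 := by
      simp only [hGdef]
      simp [hFx.1]
    rw [h1, h2]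
    simpa using hFxim
  have habs_ge : ∀ (m'' : ℤ), m'' ≠ m → (1:ℝ) ≤ |(m'':ℝ) - (m:ℝ)| := by
    intro m'' hne
    have h1 : (1:ℤ) ≤ |m'' - m| := Int.one_le_abs (sub_ne_zero.mpr hne)
    calc (1:ℝ) = ((1:ℤ):ℝ) := by norm_num
    _ ≤ ((|m'' - m| : ℤ) : ℝ) := by exact_mod_cast h1
    _ = |(m'':ℝ) - (m:ℝ)| := by rw [Int.cast_abs]; push_cast; ring_nf
  have ha0 : 0 ≤ a := hx.2.1
  have hpb : psi G b ≤ 0 := by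
    rw [psi_def, ← hyb]
    have h1 : (G y).im = (F y).im := by simp [hGdef]
    have h2 : (G y).re = (F y).re - m := by simp [hGdef]
    rw [h1, h2]
    have hFyS : F y ∈ Sspace := hmap hyS
    rcases hFyS with h0 | ⟨⟨m'', hre⟩, him⟩
    · simp only [realAxis, mem_setOf_eq] at h0
      rw [h0]
      simpa using abs_nonneg ((F y).re - (m:ℝ))
    · by_cases hmm : m'' = m
      · have hbr : F y ∈ branch m := ⟨by rw [hre, hmm], him⟩
        have heq : F y = (m:ℂ) := by
          by_contra hne
          exact hFy ⟨hbr, hne⟩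
        rw [heq]
        simp
      · rw [hre]
        have := habs_ge m'' hmm
        linarith [him.2]
  have hp0 : psi G 0 ≤ a := by
    rw [psi_def]
    have h00 : ((0:ℝ):ℂ) * Complex.I = 0 := by simp
    rw [h00]
    have h1 : (G 0).im = (F 0).im := by simp [hGdef]
    have h2 : (G 0).re = (F 0).re - m := by simp [hGdef]
    rw [h1, h2]
    have hF0S : F 0 ∈ Sspace := hmap h0S
    rcases hF0S with h0' | ⟨⟨m'', hre⟩, him⟩
    · simp only [realAxis, mem_setOf_eq] at h0'
      rw [h0']
      have := abs_nonneg ((F 0).re - (m:ℝ))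
      linarith
    · by_cases hmm : m'' = m
      · have hbr : F 0 ∈ branch m := ⟨by rw [hre, hmm], him⟩
        have hle : (F 0).im ≤ a := by
          by_contra hgt
          exact hF0 ⟨hbr, lt_of_not_ge hgt⟩
        rw [hre, hmm]
        simpa using hle
      · rw [hre]
        have := habs_ge m'' hmm
        linarith [him.2]
  have ha : 0 < a := by
    rcases eq_or_lt_of_le ha0 with h | h
    · exfalso
      have hx0 : x = 0 := by rw [hxa, ← h]; simp
      apply hF0
      refine ⟨by rw [← hx0]; exact hFx, ?_⟩
      show x.im < (F 0).im
      rw [← hx0]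
      calc x.im < b := hxy
      _ ≤ (F x).im := hFxim
    · exact h
  have hab : a < b := hxy
  have hb1 : b ≤ 1 := hy.2.2
  ext n
  simp only [PerSet, mem_setOf_eq]
  constructor
  · rintro ⟨z, hz, hper⟩
    exact hper.1
  · intro hn
    obtain ⟨z, hzS, ⟨k, hk⟩, hleast⟩ := key HG1 HG2 HG3 a b ha hab hb1 hpa hpb hp0 n hn
    have hGS : ∀ j : ℕ, G^[j] z ∈ Sspace := fun j => (HG1.iterate j) hzS
    have hiter : ∀ j : ℕ, F^[j] z = G^[j] z + (((j:ℤ) * m : ℤ):ℂ) := by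
      intro j
      induction j with
      | zero => simp
      | succ j ih =>
        rw [Function.iterate_succ_apply', ih]
        rw [degInt hdeg' ((j:ℤ)*m) _ (hGS j)]
        have hFw : F (G^[j] z) = G^[j+1] z + (m:ℂ) := by
          rw [Function.iterate_succ_apply']
          simp [hGdef]
        rw [hFw]
        push_cast
        ring
    refine ⟨z, hzS, hn, ⟨k + (n:ℤ)*m, ?_⟩, ?_⟩
    · rw [hiter n, hk]
      push_cast
      ring
    · intro i hi0 hin k' heq
      apply hleast i hi0 hin (k' - (i:ℤ)*m)
      rw [hiter i] at heq
      push_cast at heq ⊢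
      linear_combination heq

end
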